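/- Fix x ∈ ℕ. Consider 2-abacus configurations U obtained from the 2-abacus T of the partition (1) (having first gap in position (0,0)) by performing exactly x down-moves (equivalently, with w(U) = x and U↑ = T). The maximal number of removable beads on the right runner U₁ over all such U equals f(x) + 1, where f(x) = max{y : y(y+1) ≤ x}. -/
import Mathlib


lemma sum_range_card_le (S : Finset ℕ) : ∑ i ∈ Finset.range S.card, i ≤ ∑ i ∈ S, i := by
  induction S using Finset.strongInduction with
  | _ S ih =>
    rcases S.eq_empty_or_nonempty with rfl | hne
    · simp
    · obtain ⟨a, ha, hmax⟩ := S.exists_max_image id hne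
      have hcard : S.card ≤ a + 1 := by
        have : S ⊆ Finset.range (a+1) := by
          intro b hb; simp [Nat.lt_succ_iff]; exact hmax b hb
        simpa using Finset.card_le_card this
      have h1 : (S.erase a).card = S.card - 1 := Finset.card_erase_of_mem ha
      have h2 := ih (S.erase a) (Finset.erase_ssubset ha)
      have hpos : 0 < S.card := Finset.card_pos.mpr hne
      have hS : ∑ i ∈ S, i = a + ∑ i ∈ S.erase a, i := (Finset.add_sum_erase _ _ ha).symm
      rw [hS]
      have hc : S.card = (S.card - 1) + 1 := by omega
      calc ∑ i ∈ Finset.range S.card, i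
          = ∑ i ∈ Finset.range (S.card - 1), i + (S.card - 1) := by
            conv_lhs => rw [hc, Finset.sum_range_succ]
        _ ≤ ∑ i ∈ S.erase a, i + a := by
            rw [h1] at h2
            exact Nat.add_le_add h2 (by omega)
        _ = a + ∑ i ∈ S.erase a, i := Nat.add_comm _ _

lemma two_sum_ge (S : Finset ℕ) : S.card * (S.card - 1) ≤ 2 * ∑ i ∈ S, i := by
  have h := sum_range_card_le S
  have h2 := Finset.sum_range_id_mul_two S.card
  omega

/-- `f x = max {y : ℕ | y * (y + 1) ≤ x}`. -/
lemma arith_key (x y c u v : ℕ) (h1 : (y + 1 + (c + y)) * (y + (c + y)) ≤ 2 * u)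
    (h2 : c * c ≤ 2 * v + c) (hs : u + v = x + (c + y) * (c + y)) : y * (y + 1) ≤ x := by
  nlinarith [h1, h2, hs]



/-- `f x = max {y : ℕ | y * (y + 1) ≤ x}`. -/
def f (x : ℕ) : ℕ := Nat.findGreatest (fun y => y * (y + 1) ≤ x) x

/-- A 2-abacus is modelled as a finite set `B ⊆ ℕ` of bead positions: the bead at
position `n` lies in row `n / 2` on runner `n % 2` (rows increase downwards; all
rows above the displayed window are full). `rem2 B` is the number of removable
beads on the right runner: beads at `(i,1)` with `(i,0)` empty. -/
def rem2 (B : Finset ℕ) : ℕ := (B.filter fun n => n % 2 = 1 ∧ n - 1 ∉ B).card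

/-- The set of values `Rem(U₁)` over 2-abaci `U` with `w(U) = x` and `U↑ = T`,
where `T` is the 2-abacus of the partition `(1)` displayed with `r + 1` rows:
beads in all positions of rows `0, …, r - 1` and a bead at `(r, 1)`; first gap
at `(r, 0)`.  The condition `U↑ = T` says runner `0` carries `r` beads and
runner `1` carries `r + 1` beads, and `w(U) = x` says the total row-sum of `U`
exceeds that of `T` by exactly `x`. -/
def remSetOne (x : ℕ) : Set ℕ :=
  {m | ∃ r : ℕ, ∃ B : Finset ℕ,
    (B.filter fun n => n % 2 = 0).card = r ∧
    (B.filter fun n => n % 2 = 1).card = r + 1 ∧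
    (∑ b ∈ B, b / 2) = x + r * r ∧
    m = rem2 B}

/-- The maximal number of removable beads on the right runner, over all 2-abaci
obtained from the 2-abacus of the partition `(1)` by `x` down-moves, is
`f x + 1`. -/
theorem max_rem_one (x : ℕ) : IsGreatest (remSetOne x) (f x + 1) := by
  constructor
  · -- membership
    set y := f x with hy
    have hy1 : y * (y + 1) ≤ x := by
      have := Nat.findGreatest_spec (P := fun y => y * (y + 1) ≤ x) (Nat.zero_le x) (by simp)
      exact this
    set e := x - y * (y + 1) with he
    have hxe : x = y * (y + 1) + e := by omega
    refine ⟨y, (Finset.range y).image (fun i => 2*i) ∪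
      ((Finset.range y).image (fun i => 2*(y+i)+1) ∪ {2*(2*y+e)+1}), ?_, ?_, ?_, ?_⟩
    · -- even count
      have : ((Finset.range y).image (fun i => 2*i) ∪
          ((Finset.range y).image (fun i => 2*(y+i)+1) ∪ {2*(2*y+e)+1})).filter
          (fun n => n % 2 = 0) = (Finset.range y).image (fun i => 2*i) := by
        ext n
        simp only [Finset.mem_filter, Finset.mem_union, Finset.mem_image, Finset.mem_range,
          Finset.mem_singleton]
        constructor
        · rintro ⟨(⟨i, hi, rfl⟩ | ⟨i, hi, rfl⟩ | rfl), hn⟩ <;> first | exact ⟨i, hi, rfl⟩ | omega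
        · rintro ⟨i, hi, rfl⟩; exact ⟨Or.inl ⟨i, hi, rfl⟩, by omega⟩
      rw [this, Finset.card_image_of_injective _ (fun a b => by omega), Finset.card_range]
    · -- odd count
      have : ((Finset.range y).image (fun i => 2*i) ∪
          ((Finset.range y).image (fun i => 2*(y+i)+1) ∪ {2*(2*y+e)+1})).filter
          (fun n => n % 2 = 1) =
          (Finset.range y).image (fun i => 2*(y+i)+1) ∪ {2*(2*y+e)+1} := by
        ext n
        simp only [Finset.mem_filter, Finset.mem_union, Finset.mem_image, Finset.mem_range,
          Finset.mem_singleton]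
        constructor
        · rintro ⟨(⟨i, hi, rfl⟩ | h), hn⟩
          · omega
          · exact h
        · rintro (⟨i, hi, rfl⟩ | rfl)
          · exact ⟨Or.inr (Or.inl ⟨i, hi, rfl⟩), by omega⟩
          · exact ⟨Or.inr (Or.inr rfl), by omega⟩
      rw [this, Finset.card_union_of_disjoint, Finset.card_image_of_injective _
        (fun a b => by omega), Finset.card_range, Finset.card_singleton]
      · simp only [Finset.disjoint_singleton_right, Finset.mem_image, Finset.mem_range]
        rintro ⟨i, hi, h⟩; omega
    · -- sum
      rw [Finset.sum_union, Finset.sum_union]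
      · rw [Finset.sum_image (fun a _ b _ => by omega),
          Finset.sum_image (fun a _ b _ => by omega), Finset.sum_singleton]
        have h2 : ∀ i ∈ Finset.range y, 2*i/2 = i := fun i _ => by omega
        have h3 : ∀ i ∈ Finset.range y, (2*(y+i)+1)/2 = y + i := fun i _ => by omega
        rw [Finset.sum_congr rfl h2, Finset.sum_congr rfl h3]
        have hg := Finset.sum_range_id_mul_two y
        have : ∑ i ∈ Finset.range y, (y + i) = y * y + ∑ i ∈ Finset.range y, i := by
          rw [Finset.sum_add_distrib, Finset.sum_const, Finset.card_range, smul_eq_mul, mul_comm]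
        rw [this]
        have hs : (2*(2*y+e)+1)/2 = 2*y+e := by omega
        rw [hs]
        have hyy : y * (y - 1) + 2 * y = y * (y + 1) := by
          cases y with
          | zero => simp
          | succ n => simp only [Nat.succ_sub_one]; ring
        linarith [hg, hxe, hyy]
      · simp only [Finset.disjoint_singleton_right, Finset.mem_image, Finset.mem_range]
        rintro ⟨i, hi, h⟩; omega
      · simp only [Finset.disjoint_union_right, Finset.disjoint_singleton_right]
        constructor
        · rw [Finset.disjoint_left]
          simp only [Finset.mem_image, Finset.mem_range]
          rintro n ⟨i, hi, rfl⟩ ⟨j, hj, h⟩; omega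
        · simp only [Finset.mem_image, Finset.mem_range]
          rintro ⟨i, hi, h⟩; omega
    · -- rem2
      unfold rem2
      have : (((Finset.range y).image (fun i => 2*i) ∪
          ((Finset.range y).image (fun i => 2*(y+i)+1) ∪ {2*(2*y+e)+1}))).filter
          (fun n => n % 2 = 1 ∧ n - 1 ∉ ((Finset.range y).image (fun i => 2*i) ∪
          ((Finset.range y).image (fun i => 2*(y+i)+1) ∪ {2*(2*y+e)+1}))) =
          (Finset.range y).image (fun i => 2*(y+i)+1) ∪ {2*(2*y+e)+1} := by
        ext n
        simp only [Finset.mem_filter, Finset.mem_union, Finset.mem_image, Finset.mem_range,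
          Finset.mem_singleton, not_or, not_exists]
        constructor
        · rintro ⟨(⟨i, hi, rfl⟩ | h), hn, _⟩
          · omega
          · exact h
        · rintro (⟨i, hi, rfl⟩ | rfl)
          · refine ⟨Or.inr (Or.inl ⟨i, hi, rfl⟩), by omega, ?_, ?_, by omega⟩
            · intro j; intro hj; omega
            · intro j; intro hj; omega
          · refine ⟨Or.inr (Or.inr rfl), by omega, ?_, ?_, by omega⟩
            · intro j; intro hj; omega
            · intro j; intro hj; omega
      rw [this, Finset.card_union_of_disjoint, Finset.card_image_of_injective _
        (fun a b => by omega), Finset.card_range, Finset.card_singleton]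
      · simp only [Finset.disjoint_singleton_right, Finset.mem_image, Finset.mem_range]
        rintro ⟨i, hi, h⟩; omega
  · -- upper bound
    rintro m ⟨r, B, hr0, hr1, hsum, rfl⟩
    classical
    set A := (B.filter fun n => n % 2 = 0).image (· / 2) with hA
    set C := (B.filter fun n => n % 2 = 1).image (· / 2) with hC
    have hAinj : ∀ a ∈ B.filter (fun n => n % 2 = 0), ∀ b ∈ B.filter (fun n => n % 2 = 0),
        a / 2 = b / 2 → a = b := by
      intro a ha b hb h
      simp only [Finset.mem_filter] at ha hb; omega
    have hCinj : ∀ a ∈ B.filter (fun n => n % 2 = 1), ∀ b ∈ B.filter (fun n => n % 2 = 1),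
        a / 2 = b / 2 → a = b := by
      intro a ha b hb h
      simp only [Finset.mem_filter] at ha hb; omega
    have hAcard : A.card = r := by rw [hA, Finset.card_image_of_injOn hAinj, hr0]
    have hCcard : C.card = r + 1 := by rw [hC, Finset.card_image_of_injOn hCinj, hr1]
    have hAsum : ∑ a ∈ A, a = ∑ n ∈ B.filter (fun n => n % 2 = 0), n / 2 :=
      Finset.sum_image hAinj
    have hCsum : ∑ a ∈ C, a = ∑ n ∈ B.filter (fun n => n % 2 = 1), n / 2 :=
      Finset.sum_image hCinj
    have hsplit : ∑ n ∈ B.filter (fun n => n % 2 = 0), n / 2 +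
        ∑ n ∈ B.filter (fun n => n % 2 = 1), n / 2 = x + r * r := by
      rw [← hsum, ← Finset.sum_filter_add_sum_filter_not B (fun n => n % 2 = 0) (· / 2)]
      congr 2
      apply Finset.filter_congr
      intro n _; simp
    -- rem2 B = (C \ A).card
    have hDimg : (B.filter fun n => n % 2 = 1 ∧ n - 1 ∉ B).image (· / 2) = C \ A := by
      ext c
      simp only [Finset.mem_image, Finset.mem_filter, Finset.mem_sdiff, hA, hC]
      constructor
      · rintro ⟨n, ⟨hnB, hn1, hnm⟩, rfl⟩
        refine ⟨⟨n, ⟨hnB, hn1⟩, rfl⟩, ?_⟩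
        rintro ⟨b, ⟨hbB, hb0⟩, hb⟩
        have : b = n - 1 := by omega
        exact hnm (this ▸ hbB)
      · rintro ⟨⟨n, ⟨hnB, hn1⟩, rfl⟩, hnot⟩
        refine ⟨n, ⟨hnB, hn1, ?_⟩, rfl⟩
        intro hmem
        exact hnot ⟨n - 1, ⟨hmem, by omega⟩, by omega⟩
    have hm : rem2 B = (C \ A).card := by
      rw [← hDimg, rem2, Finset.card_image_of_injOn]
      intro a ha b hb h
      simp only [Finset.coe_filter, Set.mem_setOf_eq] at ha hb
      obtain ⟨-, ha1, -⟩ := ha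
      obtain ⟨-, hb1, -⟩ := hb
      have h' : a / 2 = b / 2 := h
      omega
    set m := rem2 B with hmdef
    have hU : (A ∪ C).card = m + r := by
      rw [Finset.union_comm, ← Finset.card_sdiff_add_card, ← hm, hAcard]
    have hI : (A ∩ C).card + (A ∪ C).card = r + (r + 1) := by
      rw [Finset.card_inter_add_card_union, hAcard, hCcard]
    have h1 := two_sum_ge (A ∪ C)
    have h2 := two_sum_ge (A ∩ C)
    have hsum2 : ∑ i ∈ A ∪ C, i + ∑ i ∈ A ∩ C, i = x + r * r := by
      rw [Finset.sum_union_inter, hAsum, hCsum, hsplit]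
    -- now pure arithmetic
    rcases m with _ | y
    · simp
    · have hyr : y + 1 ≤ r + 1 := by omega
      set c := (A ∩ C).card with hc
      have hcr : c + y = r := by omega
      rw [hU] at h1
      have h1' : (y + 1 + r) * (y + r) ≤ 2 * ∑ i ∈ A ∪ C, i := by
        have : (y + 1 + r) - 1 = y + r := by omega
        calc (y + 1 + r) * (y + r) = (y + 1 + r) * ((y + 1 + r) - 1) := by rw [this]
          _ ≤ 2 * ∑ i ∈ A ∪ C, i := h1
      have h2' : c * c ≤ 2 * ∑ i ∈ A ∩ C, i + c := by
        rcases c with _ | d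
        · simp
        · have h2s : (d + 1) * d ≤ 2 * ∑ i ∈ A ∩ C, i := by simpa using h2
          nlinarith [h2s]
      have key : y * (y + 1) ≤ x := by
        have hr' : r = c + y := by omega
        rw [hr'] at h1' hsum2
        exact arith_key x y c _ _ h1' h2' hsum2
      have hyx : y ≤ x := le_trans (Nat.le_mul_of_pos_right y (by omega)) key
      have : y ≤ f x := Nat.le_findGreatest hyx key
      omega
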